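/- Let q be a prime power, 0 < k ≤ n ≤ q+1, let α_1,…,α_{n−1} be distinct elements of F_q and b,c,λ,η ∈ F_q. The code RCTRS_{0,1}(α,b,c,λ,η) is MDS if and only if both of the following hold: (i) for every subset I ⊆ {1,…,n−1} of size k, (−1)^k η ∏_{i∈I} α_i ≠ 1; and (ii) for every subset J ⊆ {1,…,n−1} of size k−1, Φ_J(b) ≠ λ Φ_J(c). -/

import Mathlib

open Polynomial Finset

noncomputable section

variable {F : Type*} [Field F]

/-- The twisted polynomial `∑_{i<k} f_i x^i + η f_h x^{k-1+t}` from `V_{k,t,h,η}`. -/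
def twPoly (k t h : ℕ) (η : F) (f : Fin k → F) : Polynomial F :=
  (∑ i : Fin k, Polynomial.C (f i) * Polynomial.X ^ (i : ℕ)) +
    Polynomial.C (η * if hh : h < k then f ⟨h, hh⟩ else 0) * Polynomial.X ^ (k - 1 + t)

/-- The coefficient `f_{k-1}` of a coefficient vector `f : Fin k → F`. -/
def topCoeffFin {k : ℕ} (f : Fin k → F) : F :=
  if hk : k - 1 < k then f ⟨k - 1, hk⟩ else 0

/-- Codewords of the row-column twisted Reed-Solomon code. -/
def rctrsWords (k t h : ℕ) (η : F) {m : ℕ} (α : Fin m → F) (b c lam : F) :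
    Set (Fin (m + 1) → F) :=
  { w | ∃ f : Fin k → F,
      w = Fin.snoc (fun i => (twPoly k t h η f).eval (α i))
            ((twPoly k t h η f).eval b - lam * (twPoly k t h η f).eval c) }

/-- The row-column twisted Reed-Solomon code `RCTRS_{h,t}(α,b,c,λ,η)`. -/
def RCTRS (k t h : ℕ) (η : F) {m : ℕ} (α : Fin m → F) (b c lam : F) :
    Submodule F (Fin (m + 1) → F) :=
  Submodule.span F (rctrsWords k t h η α b c lam)

/-- Codewords of the extended row-column twisted Reed-Solomon code. -/
def rctrsWordsExt (k t h : ℕ) (η : F) {m : ℕ} (α : Fin m → F) (b c lam : F) :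
    Set (Fin (m + 2) → F) :=
  { w | ∃ f : Fin k → F,
      w = Fin.snoc (Fin.snoc (fun i => (twPoly k t h η f).eval (α i))
            ((twPoly k t h η f).eval b - lam * (twPoly k t h η f).eval c)) (topCoeffFin f) }

/-- The extended row-column twisted Reed-Solomon code `RCTRS_{h,t}(α,b,c,λ,η,∞)`. -/
def RCTRSext (k t h : ℕ) (η : F) {m : ℕ} (α : Fin m → F) (b c lam : F) :
    Submodule F (Fin (m + 2) → F) :=
  Submodule.span F (rctrsWordsExt k t h η α b c lam)

/-- Hamming weight. -/
def wt {n : ℕ} (x : Fin n → F) : ℕ := Nat.card {i : Fin n // x i ≠ 0}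

/-- An `[n,k]` code is MDS if it has dimension `k` and minimum Hamming distance `n-k+1`. -/
def IsMDS {n : ℕ} (C : Submodule F (Fin n → F)) (k : ℕ) : Prop :=
  Module.finrank F C = k ∧ ∀ x ∈ C, x ≠ 0 → n - k + 1 ≤ wt x

/-- The Schur square of a code. -/
def schurSq {n : ℕ} (C : Submodule F (Fin n → F)) : Submodule F (Fin n → F) :=
  Submodule.span F { w | ∃ x ∈ C, ∃ y ∈ C, w = x * y }

/-- Code equivalence: a permutation of coordinates followed by nonzero coordinatewise scaling. -/
def codeEquiv {n : ℕ} (C D : Submodule F (Fin n → F)) : Prop :=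
  ∃ σ : Equiv.Perm (Fin n), ∃ v : Fin n → F, (∀ i, v i ≠ 0) ∧
    (C : Set (Fin n → F)) =
      (fun x : Fin n → F => fun i => v i * x (σ i)) '' (D : Set (Fin n → F))

/-- Generalized Reed-Solomon code. -/
def GRS (k : ℕ) {n : ℕ} (α v : Fin n → F) : Submodule F (Fin n → F) :=
  Submodule.span F
    { w | ∃ f ∈ Polynomial.degreeLT F k, w = fun i => v i * Polynomial.eval (α i) f }

/-- Extended generalized Reed-Solomon code. -/
def GRSext (k : ℕ) {n : ℕ} (α v : Fin n → F) : Submodule F (Fin (n + 1) → F) :=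
  Submodule.span F
    { w | ∃ f ∈ Polynomial.degreeLT F k,
        w = Fin.snoc (fun i => v i * Polynomial.eval (α i) f) (f.coeff (k - 1)) }

/-- A code of length `m+1` is non-RS if it is equivalent to no GRS and no extended GRS code. -/
def IsNonRS {m : ℕ} (C : Submodule F (Fin (m + 1) → F)) : Prop :=
  (∀ (k' : ℕ) (α v : Fin (m + 1) → F), Function.Injective α → (∀ i, v i ≠ 0) →
      ¬ codeEquiv C (GRS k' α v)) ∧
  (∀ (k' : ℕ) (α v : Fin m → F), Function.Injective α → (∀ i, v i ≠ 0) →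
      ¬ codeEquiv C (GRSext k' α v))

/-- Column twisted Reed-Solomon code. -/
def CTRS (k : ℕ) {m : ℕ} (α : Fin m → F) (b c lam : F) : Submodule F (Fin (m + 1) → F) :=
  Submodule.span F
    { w | ∃ f ∈ Polynomial.degreeLT F k,
        w = Fin.snoc (fun i => Polynomial.eval (α i) f)
              (Polynomial.eval b f - lam * Polynomial.eval c f) }

/-- Extended column twisted Reed-Solomon code. -/
def CTRSext (k : ℕ) {m : ℕ} (α : Fin m → F) (b c lam : F) : Submodule F (Fin (m + 2) → F) :=
  Submodule.span F
    { w | ∃ f ∈ Polynomial.degreeLT F k,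
        w = Fin.snoc (Fin.snoc (fun i => Polynomial.eval (α i) f)
              (Polynomial.eval b f - lam * Polynomial.eval c f)) (f.coeff (k - 1)) }

/-- `Φ_J(x) = ∏_{j∈J}(x−α_j)·(1 + (−1)^{|J|} η x ∏_{j∈J} α_j)`. -/
def PhiRC {m : ℕ} (α : Fin m → F) (η : F) (J : Finset (Fin m)) (x : F) : F :=
  (∏ j ∈ J, (x - α j)) * (1 + (-1 : F) ^ J.card * η * x * ∏ j ∈ J, α j)

/-- `Ψ_J(x) = ∏_{j∈J}(x−α_j)·(1 + ηx + η Σ_{j∈J} α_j)`. -/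
def PsiRC {m : ℕ} (α : Fin m → F) (η : F) (J : Finset (Fin m)) (x : F) : F :=
  (∏ j ∈ J, (x - α j)) * (1 + η * x + η * ∑ j ∈ J, α j)

/-- `Φ_{J,h}(x) = ∏_{j∈J}(x−α_j)·(1 + (−1)^{k−1−h} η σ_{k−h}(α_J, x))`. -/
def PhiRCh {m : ℕ} (α : Fin m → F) (η : F) (k h : ℕ) (J : Finset (Fin m)) (x : F) : F :=
  (∏ j ∈ J, (x - α j)) *
    (1 + (-1 : F) ^ (k - 1 - h) * η * Multiset.esymm (x ::ₘ J.val.map α) (k - h))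

/-- The image of a subgroup of `Fˣ` in `F`. -/
def unitsImage (G : Subgroup Fˣ) : Set F := (fun g : Fˣ => (g : F)) '' (G : Set Fˣ)

end

noncomputable section RCTRSHelpers

namespace RCTRSAux

open Polynomial Finset

variable {F : Type*} [Field F]

lemma twPoly_eq {k : ℕ} (hk0 : 0 < k) (η : F) (f : Fin k → F) :
    twPoly k 1 0 η f =
      (∑ i : Fin k, Polynomial.C (f i) * Polynomial.X ^ (i : ℕ)) +
        Polynomial.C (η * f ⟨0, hk0⟩) * Polynomial.X ^ k := by
  unfold twPoly
  rw [dif_pos hk0, Nat.sub_add_cancel hk0]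

lemma twPoly_coeff {k : ℕ} (hk0 : 0 < k) (η : F) (f : Fin k → F) (j : ℕ) :
    (twPoly k 1 0 η f).coeff j =
      (if hj : j < k then f ⟨j, hj⟩ else 0) +
        (if j = k then η * f ⟨0, hk0⟩ else 0) := by
  rw [twPoly_eq hk0, coeff_add, finset_sum_coeff]
  congr 1
  · simp only [coeff_C_mul, coeff_X_pow, mul_ite, mul_one, mul_zero]
    by_cases hj : j < k
    · rw [dif_pos hj, Finset.sum_eq_single (⟨j, hj⟩ : Fin k)]
      · simp
      · intro b _ hb
        rw [if_neg fun h => hb (Fin.val_injective h.symm)]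
      · simp
    · rw [dif_neg hj, Finset.sum_eq_zero]
      intro i _
      rw [if_neg]
      intro h
      exact hj (h ▸ i.isLt)
  · simp only [coeff_C_mul, coeff_X_pow, mul_ite, mul_one, mul_zero]

lemma twPoly_degree_le {k : ℕ} (hk0 : 0 < k) (η : F) (f : Fin k → F) :
    (twPoly k 1 0 η f).degree ≤ (k : ℕ) := by
  rw [degree_le_iff_coeff_zero]
  intro j hj
  have hj' : k < j := by exact_mod_cast hj
  rw [twPoly_coeff hk0, dif_neg (by omega), if_neg (by omega), add_zero]

lemma twPoly_eq_zero {k : ℕ} (hk0 : 0 < k) (η : F) (f : Fin k → F)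
    (h : twPoly k 1 0 η f = 0) : f = 0 := by
  funext i
  have := twPoly_coeff hk0 η f i
  rw [h, coeff_zero, dif_pos i.isLt, if_neg (by omega : (i : ℕ) ≠ k), add_zero] at this
  simpa using this.symm

/-- Building a coefficient vector from a suitable polynomial. -/
lemma twPoly_mk {k : ℕ} (hk0 : 0 < k) (η : F) (g : Polynomial F)
    (hdeg : g.degree ≤ (k : ℕ)) (hstr : g.coeff k = η * g.coeff 0) :
    twPoly k 1 0 η (fun i => g.coeff i) = g := by
  ext j
  rw [twPoly_coeff hk0]
  by_cases hj : j < k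
  · rw [dif_pos hj, if_neg (by omega), add_zero]
  · by_cases hjk : j = k
    · subst hjk
      rw [dif_neg hj, if_pos rfl, zero_add, ← hstr]
    · rw [dif_neg hj, if_neg hjk, add_zero]
      exact (coeff_eq_zero_of_degree_lt (lt_of_le_of_lt hdeg (by exact_mod_cast by omega))).symm

lemma twPoly_add {k : ℕ} (hk0 : 0 < k) (η : F) (f g : Fin k → F) :
    twPoly k 1 0 η (f + g) = twPoly k 1 0 η f + twPoly k 1 0 η g := by
  ext j
  rw [coeff_add, twPoly_coeff hk0, twPoly_coeff hk0, twPoly_coeff hk0]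
  split_ifs <;> simp <;> ring

lemma twPoly_smul {k : ℕ} (hk0 : 0 < k) (η : F) (a : F) (f : Fin k → F) :
    twPoly k 1 0 η (a • f) = Polynomial.C a * twPoly k 1 0 η f := by
  ext j
  rw [coeff_C_mul, twPoly_coeff hk0, twPoly_coeff hk0]
  split_ifs <;> simp <;> ring

lemma twPoly_zero {k : ℕ} (hk0 : 0 < k) (η : F) :
    twPoly k 1 0 η (0 : Fin k → F) = 0 := by
  have h := twPoly_smul hk0 η 0 (0 : Fin k → F)
  simpa using h

end RCTRSAux

end RCTRSHelpers
noncomputable section EV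

namespace RCTRSAux

open Polynomial Finset
open scoped Classical

variable {F : Type*} [Field F]

/-- Evaluation map of the RCTRS code as a linear map. -/
def ev {k : ℕ} (hk0 : 0 < k) (η : F) {m : ℕ} (α : Fin m → F) (b c lam : F) :
    (Fin k → F) →ₗ[F] (Fin (m + 1) → F) where
  toFun f := Fin.snoc (fun i => (twPoly k 1 0 η f).eval (α i))
      ((twPoly k 1 0 η f).eval b - lam * (twPoly k 1 0 η f).eval c)
  map_add' f g := by
    funext i
    refine Fin.lastCases ?_ ?_ i <;>
      simp [twPoly_add hk0] <;> ring
  map_smul' a f := by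
    funext i
    refine Fin.lastCases ?_ ?_ i <;>
      simp [twPoly_smul hk0, smul_eq_mul] <;> ring

lemma ev_castSucc {k : ℕ} (hk0 : 0 < k) (η : F) {m : ℕ} (α : Fin m → F) (b c lam : F)
    (f : Fin k → F) (j : Fin m) :
    ev hk0 η α b c lam f j.castSucc = (twPoly k 1 0 η f).eval (α j) := by
  simp [ev]

lemma ev_last {k : ℕ} (hk0 : 0 < k) (η : F) {m : ℕ} (α : Fin m → F) (b c lam : F)
    (f : Fin k → F) :
    ev hk0 η α b c lam f (Fin.last m) =
      (twPoly k 1 0 η f).eval b - lam * (twPoly k 1 0 η f).eval c := by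
  simp [ev]

lemma RCTRS_eq_range {k : ℕ} (hk0 : 0 < k) (η : F) {m : ℕ} (α : Fin m → F) (b c lam : F) :
    RCTRS k 1 0 η α b c lam = LinearMap.range (ev hk0 η α b c lam) := by
  have hw : rctrsWords k 1 0 η α b c lam = Set.range (ev hk0 η α b c lam) := by
    ext w
    constructor
    · rintro ⟨f, rfl⟩; exact ⟨f, rfl⟩
    · rintro ⟨f, rfl⟩; exact ⟨f, rfl⟩
  rw [RCTRS, hw, ← LinearMap.coe_range, Submodule.span_eq]

lemma wt_eq {n : ℕ} (x : Fin n → F) :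
    wt x = n - (Finset.univ.filter (fun i => x i = 0)).card := by
  classical
  have h1 : wt x = (Finset.univ.filter (fun i => ¬ x i = 0)).card := by
    rw [wt, Nat.card_eq_fintype_card, Fintype.card_subtype]
  have h2 := Finset.card_filter_add_card_filter_not
    (s := (Finset.univ : Finset (Fin n))) (p := fun i => x i = 0)
  rw [Finset.card_univ, Fintype.card_fin] at h2
  omega

/-- MDS ↔ "any codeword vanishing on `k` coordinates comes from `f = 0`". -/
lemma isMDS_iff_P {k m : ℕ} (hk0 : 0 < k) (hkn : k ≤ m + 1) (η : F)
    (α : Fin m → F) (b c lam : F) :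
    IsMDS (RCTRS k 1 0 η α b c lam) k ↔
      ∀ (f : Fin k → F) (S : Finset (Fin (m + 1))), S.card = k →
        (∀ i ∈ S, ev hk0 η α b c lam f i = 0) → f = 0 := by
  classical
  rw [RCTRS_eq_range hk0]
  set e := ev hk0 η α b c lam with he
  constructor
  · rintro ⟨hr, hd⟩ f S hScard hSz
    -- injectivity of e
    have hker : LinearMap.ker e = ⊥ := by
      have h1 := LinearMap.finrank_range_add_finrank_ker e
      rw [hr, Module.finrank_pi, Fintype.card_fin] at h1
      have : Module.finrank F (LinearMap.ker e) = 0 := by omega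
      exact Submodule.finrank_eq_zero.mp this
    by_cases hx : e f = 0
    · exact LinearMap.ker_eq_bot.mp hker (by rw [hx, map_zero])
    · exfalso
      have hwt := hd (e f) (LinearMap.mem_range_self e f) hx
      have hz : S ⊆ Finset.univ.filter (fun i => e f i = 0) := by
        intro i hi
        simp only [Finset.mem_filter, Finset.mem_univ, true_and]
        exact hSz i hi
      have hcard := Finset.card_le_card hz
      rw [hScard] at hcard
      rw [wt_eq] at hwt
      omega
  · intro P
    have hinj : Function.Injective e := by
      rw [← LinearMap.ker_eq_bot, eq_bot_iff]
      intro f hf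
      obtain ⟨S, _, hScard⟩ := Finset.exists_subset_card_eq
        (s := (Finset.univ : Finset (Fin (m + 1)))) (n := k)
        (by simpa using hkn)
      have : f = 0 := P f S hScard (fun i _ => by
        rw [LinearMap.mem_ker] at hf; rw [hf]; rfl)
      simp [this]
    constructor
    · rw [LinearMap.finrank_range_of_inj hinj, Module.finrank_pi, Fintype.card_fin]
    · rintro x hx hx0
      obtain ⟨f, rfl⟩ := hx
      set Z := Finset.univ.filter (fun i => e f i = 0) with hZ
      have hZcard : Z.card ≤ k - 1 := by
        by_contra hc
        obtain ⟨S, hSsub, hScard⟩ := Finset.exists_subset_card_eq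
          (s := Z) (n := k) (by omega)
        have : f = 0 := P f S hScard (fun i hi => by
          have := hSsub hi
          rw [hZ, Finset.mem_filter] at this
          exact this.2)
        exact hx0 (by simp [this])
      have hZle : Z.card ≤ m + 1 := by
        refine le_trans (Finset.card_le_card (Finset.subset_univ Z)) ?_
        simp
      rw [wt_eq, ← hZ]
      omega

end RCTRSAux

end EV
noncomputable section RCTRSPoly

namespace RCTRSAux

open Polynomial Finset

variable {F : Type*} [Field F]

lemma Rp_monic {m : ℕ} (α : Fin m → F) (J : Finset (Fin m)) :
    (∏ j ∈ J, (Polynomial.X - Polynomial.C (α j))).Monic :=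
  monic_prod_of_monic _ _ fun j _ => monic_X_sub_C _

lemma Rp_natDegree {m : ℕ} (α : Fin m → F) (J : Finset (Fin m)) :
    (∏ j ∈ J, (Polynomial.X - Polynomial.C (α j))).natDegree = J.card := by
  rw [natDegree_prod_of_monic _ _ fun j _ => monic_X_sub_C _]
  simp [natDegree_X_sub_C]

lemma Rp_coeff_zero {m : ℕ} (α : Fin m → F) (J : Finset (Fin m)) :
    (∏ j ∈ J, (Polynomial.X - Polynomial.C (α j))).coeff 0 =
      (-1 : F) ^ J.card * ∏ j ∈ J, α j := by
  rw [coeff_zero_eq_eval_zero, eval_prod]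
  simp only [eval_sub, eval_X, eval_C, zero_sub]
  rw [Finset.prod_congr rfl fun j _ => (neg_one_mul (α j)).symm, Finset.prod_mul_distrib,
    Finset.prod_const]

lemma Rp_eval {m : ℕ} (α : Fin m → F) (J : Finset (Fin m)) (x : F) :
    (∏ j ∈ J, (Polynomial.X - Polynomial.C (α j))).eval x = ∏ j ∈ J, (x - α j) := by
  rw [eval_prod]
  simp

lemma Rp_eval_root {m : ℕ} (α : Fin m → F) {J : Finset (Fin m)} {j : Fin m} (hj : j ∈ J) :
    (∏ i ∈ J, (Polynomial.X - Polynomial.C (α i))).eval (α j) = 0 := by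
  rw [Rp_eval]
  exact Finset.prod_eq_zero hj (by ring)

lemma vanish {m : ℕ} {α : Fin m → F} (hα : Function.Injective α) {J : Finset (Fin m)}
    {p : Polynomial F} (hev : ∀ j ∈ J, p.eval (α j) = 0) (hdeg : p.natDegree < J.card) :
    p = 0 := by
  refine eq_zero_of_natDegree_lt_card_of_eval_eq_zero p
    (f := fun j : {x // x ∈ J} => α j) (hα.comp Subtype.val_injective)
    (fun j => hev j j.2) ?_
  rwa [Fintype.card_coe]

lemma P_of_conditions {k m : ℕ} (hk0 : 0 < k) {α : Fin m → F}
    (hα : Function.Injective α) (b c lam η : F)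
    (h1 : ∀ I : Finset (Fin m), I.card = k → (-1 : F) ^ k * η * ∏ i ∈ I, α i ≠ 1)
    (h2 : ∀ J : Finset (Fin m), J.card = k - 1 → PhiRC α η J b ≠ lam * PhiRC α η J c)
    (f : Fin k → F) (S : Finset (Fin (m + 1))) (hScard : S.card = k)
    (hSz : ∀ i ∈ S, ev hk0 η α b c lam f i = 0) : f = 0 := by
  classical
  set g := twPoly k 1 0 η f with hgdef
  have hgc0 : g.coeff 0 = f ⟨0, hk0⟩ := by
    rw [hgdef, twPoly_coeff hk0, dif_pos hk0, if_neg (by omega), add_zero]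
  have hgck : g.coeff k = η * f ⟨0, hk0⟩ := by
    rw [hgdef, twPoly_coeff hk0, dif_neg (lt_irrefl k), if_pos rfl, zero_add]
  have hgdeg : g.degree ≤ (k : ℕ) := twPoly_degree_le hk0 η f
  set J0 : Finset (Fin m) := Finset.univ.filter (fun j => j.castSucc ∈ S) with hJ0
  have hJg : ∀ j ∈ J0, g.eval (α j) = 0 := by
    intro j hj
    rw [hJ0, Finset.mem_filter] at hj
    have := hSz _ hj.2
    rwa [ev_castSucc] at this
  set Rp := ∏ j ∈ J0, (Polynomial.X - Polynomial.C (α j)) with hRp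
  have hRm : Rp.Monic := Rp_monic α J0
  have hRd : Rp.natDegree = J0.card := Rp_natDegree α J0
  by_cases hlast : Fin.last m ∈ S
  · -- case: the twist coordinate is among the zeros
    have hJcard : J0.card = k - 1 := by
      have hbij : J0.card = (S.erase (Fin.last m)).card := by
        apply Finset.card_bij (fun j _ => j.castSucc)
        · intro a ha
          rw [hJ0, Finset.mem_filter] at ha
          exact Finset.mem_erase.mpr ⟨(Fin.castSucc_lt_last a).ne, ha.2⟩
        · intro a _ a' _ h
          exact Fin.castSucc_injective _ h
        · intro i hi
          rw [Finset.mem_erase] at hi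
          obtain ⟨j, rfl⟩ := Fin.exists_castSucc_eq.mpr hi.1
          exact ⟨j, Finset.mem_filter.mpr ⟨Finset.mem_univ _, hi.2⟩, rfl⟩
      rw [hbij, Finset.card_erase_of_mem hlast, hScard]
    have hlastz : g.eval b - lam * g.eval c = 0 := by
      have := hSz _ hlast
      rwa [ev_last] at this
    have hmod : g %ₘ Rp + Rp * (g /ₘ Rp) = g := modByMonic_add_div g Rp
    have hr0 : g %ₘ Rp = 0 := by
      by_cases hne : g %ₘ Rp = 0
      · exact hne
      · refine vanish hα (J := J0) (fun j hj => ?_) ?_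
        · have heq : (g %ₘ Rp).eval (α j) =
              g.eval (α j) - Rp.eval (α j) * (g /ₘ Rp).eval (α j) := by
            have h7 := congrArg (Polynomial.eval (α j)) hmod
            rw [eval_add, eval_mul] at h7
            linear_combination h7
          rw [heq, hJg j hj, hRp, Rp_eval_root α hj]; ring
        · rw [← hRd]
          exact natDegree_lt_natDegree hne (degree_modByMonic_lt g hRm)
    set q := g /ₘ Rp with hq
    have hgq : g = Rp * q := by rw [← hmod, hr0, zero_add]
    by_cases hq0 : q = 0
    · have : g = 0 := by rw [hgq, hq0, mul_zero]
      exact twPoly_eq_zero hk0 η f this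
    · have hndq : q.natDegree ≤ 1 := by
        have h3 : g.natDegree = Rp.natDegree + q.natDegree := by
          rw [hgq, natDegree_mul hRm.ne_zero hq0]
        have h4 : g.natDegree ≤ k := natDegree_le_iff_degree_le.mpr hgdeg
        omega
      set u := q.coeff 0 with hu
      set v := q.coeff 1 with hv
      have hqeq : q = Polynomial.C v * Polynomial.X + Polynomial.C u :=
        eq_X_add_C_of_degree_le_one
          ((degree_le_natDegree).trans (by exact_mod_cast hndq))
      have hcoeffRtop : Rp.coeff (k - 1) = 1 := by
        rw [show k - 1 = Rp.natDegree by omega]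
        exact hRm.coeff_natDegree
      have hcoeffRk : Rp.coeff (k - 1 + 1) = 0 :=
        coeff_eq_zero_of_natDegree_lt (by omega)
      have hgq' : g = Polynomial.C v * (Rp * Polynomial.X) + Polynomial.C u * Rp := by
        rw [hgq, hqeq]; ring
      have hck : g.coeff k = v := by
        rw [hgq', coeff_add, coeff_C_mul, coeff_C_mul,
          show k = (k - 1) + 1 by omega, coeff_mul_X, hcoeffRtop, hcoeffRk,
          mul_one, mul_zero, add_zero]
      have hc0 : g.coeff 0 = ((-1 : F) ^ (k - 1) * ∏ j ∈ J0, α j) * u := by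
        rw [hgq, mul_coeff_zero, ← hu, hRp, Rp_coeff_zero, hJcard]
      have hstr : v = η * (((-1 : F) ^ (k - 1) * ∏ j ∈ J0, α j) * u) := by
        rw [← hck, hgck, ← hgc0, hc0]
      have hevalg : ∀ x : F, g.eval x = u * PhiRC α η J0 x := by
        intro x
        rw [hgq, eval_mul, hRp, Rp_eval, hqeq, PhiRC, hJcard]
        simp only [eval_add, eval_mul, eval_C, eval_X]
        rw [hstr]
        ring
      have hu0 : u = 0 := by
        have h6 := hlastz
        rw [hevalg b, hevalg c] at h6
        have h5 : u * (PhiRC α η J0 b - lam * PhiRC α η J0 c) = 0 := by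
          linear_combination h6
        rcases mul_eq_zero.mp h5 with h | h
        · exact h
        · exact absurd (sub_eq_zero.mp h) (h2 J0 hJcard)
      have hv0 : v = 0 := by rw [hstr, hu0]; ring
      have : g = 0 := by rw [hgq, hqeq, hu0, hv0]; simp
      exact twPoly_eq_zero hk0 η f this
  · -- case: all zeros are evaluation points
    have hJcard : J0.card = k := by
      have hbij : J0.card = S.card := by
        apply Finset.card_bij (fun j _ => j.castSucc)
        · intro a ha
          rw [hJ0, Finset.mem_filter] at ha
          exact ha.2
        · intro a _ a' _ h
          exact Fin.castSucc_injective _ h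
        · intro i hi
          have hne : i ≠ Fin.last m := fun h => hlast (h ▸ hi)
          obtain ⟨j, rfl⟩ := Fin.exists_castSucc_eq.mpr hne
          exact ⟨j, Finset.mem_filter.mpr ⟨Finset.mem_univ _, hi⟩, rfl⟩
      rw [hbij, hScard]
    set γ := η * f ⟨0, hk0⟩ with hγ
    set d := g - Polynomial.C γ * Rp with hd
    have hdck : d.coeff k = 0 := by
      rw [hd, coeff_sub, hgck, coeff_C_mul,
        show Rp.coeff k = 1 by
          rw [show k = Rp.natDegree by omega]; exact hRm.coeff_natDegree]
      rw [hγ]; ring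
    have hRdeg : Rp.degree ≤ (k : ℕ) := by
      calc Rp.degree ≤ (Rp.natDegree : WithBot ℕ) := degree_le_natDegree
      _ = (k : ℕ) := by rw [hRd, hJcard]
    have hddeg : d.degree ≤ (k : ℕ) := by
      refine (degree_sub_le _ _).trans (max_le hgdeg ?_)
      refine (degree_mul_le _ _).trans ?_
      calc (Polynomial.C γ).degree + Rp.degree ≤ 0 + (k : ℕ) :=
            add_le_add degree_C_le hRdeg
      _ = (k : ℕ) := zero_add _
    have hd0 : d = 0 := by
      by_cases hne : d = 0
      · exact hne
      · refine vanish hα (J := J0) (fun j hj => ?_) ?_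
        · rw [hd, eval_sub, eval_mul, eval_C, hJg j hj, hRp, Rp_eval_root α hj]; ring
        · rw [hJcard]
          have hle : d.natDegree ≤ k := natDegree_le_iff_degree_le.mpr hddeg
          rcases lt_or_eq_of_le hle with h | h
          · exact h
          · exfalso
            have hlc := leadingCoeff_ne_zero.mpr hne
            rw [leadingCoeff, h] at hlc
            exact hlc hdck
    have hg : g = Polynomial.C γ * Rp := by
      have := sub_eq_zero.mp hd0
      exact this
    have hc0 : f ⟨0, hk0⟩ = γ * ((-1 : F) ^ k * ∏ j ∈ J0, α j) := by
      rw [← hgc0, hg, coeff_C_mul, hRp, Rp_coeff_zero, hJcard]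
    have hf0 : f ⟨0, hk0⟩ = 0 := by
      by_contra hne
      apply h1 J0 hJcard
      have hcc : f ⟨0, hk0⟩ * ((-1 : F) ^ k * η * ∏ j ∈ J0, α j) = f ⟨0, hk0⟩ * 1 := by
        rw [hγ] at hc0
        linear_combination -hc0
      exact mul_left_cancel₀ hne hcc
    have : g = 0 := by rw [hg, hγ, hf0, mul_zero, map_zero, zero_mul]
    exact twPoly_eq_zero hk0 η f this

end RCTRSAux

end RCTRSPoly
open RCTRSAux Polynomial Finset in
theorem stmt1 {F : Type*} [Field F] [Fintype F] {m k : ℕ}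
    (hk0 : 0 < k) (hkn : k ≤ m + 1) (hq : m ≤ Fintype.card F)
    (α : Fin m → F) (hα : Function.Injective α) (b c lam η : F) :
    IsMDS (RCTRS k 1 0 η α b c lam) k ↔
      ((∀ I : Finset (Fin m), I.card = k →
          (-1 : F) ^ k * η * ∏ i ∈ I, α i ≠ 1) ∧
       (∀ J : Finset (Fin m), J.card = k - 1 →
          PhiRC α η J b ≠ lam * PhiRC α η J c)) := by
  classical
  rw [isMDS_iff_P hk0 hkn η α b c lam]
  constructor
  · intro P
    constructor
    · -- condition (i)
      intro I hI hbad
      set g := ∏ i ∈ I, (Polynomial.X - Polynomial.C (α i)) with hgdef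
      have hRm : g.Monic := Rp_monic α I
      have hRd : g.natDegree = I.card := Rp_natDegree α I
      have hdeg : g.degree ≤ (k : ℕ) := by
        calc g.degree ≤ (g.natDegree : WithBot ℕ) := degree_le_natDegree
        _ = (k : ℕ) := by rw [hRd, hI]
      have hstr : g.coeff k = η * g.coeff 0 := by
        rw [show k = g.natDegree by rw [hRd, hI], hRm.coeff_natDegree, hgdef,
          Rp_coeff_zero, hI]
        linear_combination -hbad
      set f : Fin k → F := fun i => g.coeff i with hf
      have htw : twPoly k 1 0 η f = g := twPoly_mk hk0 η g hdeg hstr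
      set S : Finset (Fin (m + 1)) := I.image Fin.castSucc with hS
      have hScard : S.card = k := by
        rw [hS, Finset.card_image_of_injective _ (Fin.castSucc_injective m), hI]
      have hSz : ∀ i ∈ S, ev hk0 η α b c lam f i = 0 := by
        intro i hi
        rw [hS, Finset.mem_image] at hi
        obtain ⟨j, hj, rfl⟩ := hi
        rw [ev_castSucc, htw, hgdef]
        exact Rp_eval_root α hj
      have hf0 : f = 0 := P f S hScard hSz
      have : g = 0 := by
        rw [← htw, hf0]
        exact twPoly_zero hk0 η
      exact hRm.ne_zero this
    · -- condition (ii)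
      intro J hJ hbad
      set Rp := ∏ j ∈ J, (Polynomial.X - Polynomial.C (α j)) with hRpdef
      have hRm : Rp.Monic := Rp_monic α J
      have hRd : Rp.natDegree = J.card := Rp_natDegree α J
      set e0 : F := (-1 : F) ^ (k - 1) * η * ∏ j ∈ J, α j with he0
      set g := (Polynomial.C e0 * Polynomial.X + Polynomial.C 1) * Rp with hgdef
      have hlin : (Polynomial.C e0 * Polynomial.X + Polynomial.C (1 : F)).degree ≤ 1 := by
        refine (degree_add_le _ _).trans
          (max_le ?_ (degree_C_le.trans (by norm_num)))
        refine (degree_mul_le _ _).trans ?_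
        calc (Polynomial.C e0).degree + (Polynomial.X (R := F)).degree ≤ 0 + 1 :=
              add_le_add degree_C_le (le_of_eq degree_X)
        _ = 1 := zero_add 1
      have hgdeg : g.degree ≤ (k : ℕ) := by
        refine (degree_mul_le _ _).trans ?_
        calc (Polynomial.C e0 * Polynomial.X + Polynomial.C 1).degree + Rp.degree
            ≤ 1 + ((k - 1 : ℕ) : WithBot ℕ) :=
              add_le_add hlin (degree_le_natDegree.trans (le_of_eq (by rw [hRd, hJ])))
        _ = (k : ℕ) := by
              rw [show (1 : WithBot ℕ) = ((1 : ℕ) : WithBot ℕ) from rfl, ← Nat.cast_add]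
              congr 1
              omega
      have hcoeffRtop : Rp.coeff (k - 1) = 1 := by
        rw [show k - 1 = Rp.natDegree by rw [hRd, hJ]]
        exact hRm.coeff_natDegree
      have hcoeffRk : Rp.coeff (k - 1 + 1) = 0 :=
        coeff_eq_zero_of_natDegree_lt (by rw [hRd, hJ]; omega)
      have hgq' : g = Polynomial.C e0 * (Rp * Polynomial.X) + Polynomial.C 1 * Rp := by
        rw [hgdef]; ring
      have hck : g.coeff k = e0 := by
        rw [hgq', coeff_add, coeff_C_mul, coeff_C_mul,
          show k = (k - 1) + 1 by omega, coeff_mul_X, hcoeffRtop, hcoeffRk,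
          mul_one, one_mul, add_zero]
      have hc0 : g.coeff 0 = (-1 : F) ^ (k - 1) * ∏ j ∈ J, α j := by
        rw [hgdef, mul_coeff_zero, hRpdef, Rp_coeff_zero, hJ]
        simp
      have hstr : g.coeff k = η * g.coeff 0 := by
        rw [hck, hc0, he0]; ring
      set f : Fin k → F := fun i => g.coeff i with hf
      have htw : twPoly k 1 0 η f = g := twPoly_mk hk0 η g hgdeg hstr
      have hgne : g ≠ 0 := by
        rw [hgdef]
        refine mul_ne_zero (fun h => ?_) hRm.ne_zero
        have := congrArg (fun p => Polynomial.coeff p 0) h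
        simp at this
      have hevalg : ∀ x : F, g.eval x = PhiRC α η J x := by
        intro x
        rw [hgdef, eval_mul, hRpdef, Rp_eval, PhiRC, hJ]
        simp only [eval_add, eval_mul, eval_C, eval_X, eval_one]
        rw [he0]
        ring
      set S : Finset (Fin (m + 1)) := insert (Fin.last m) (J.image Fin.castSucc) with hS
      have hnotmem : Fin.last m ∉ J.image Fin.castSucc := by
        rw [Finset.mem_image]
        rintro ⟨j, _, hj⟩
        exact (Fin.castSucc_lt_last j).ne hj
      have hScard : S.card = k := by
        rw [hS, Finset.card_insert_of_notMem hnotmem,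
          Finset.card_image_of_injective _ (Fin.castSucc_injective m), hJ]
        omega
      have hSz : ∀ i ∈ S, ev hk0 η α b c lam f i = 0 := by
        intro i hi
        rw [hS, Finset.mem_insert] at hi
        rcases hi with rfl | hi
        · rw [ev_last, htw, hevalg b, hevalg c, hbad]
          ring
        · rw [Finset.mem_image] at hi
          obtain ⟨j, hj, rfl⟩ := hi
          rw [ev_castSucc, htw, hgdef, eval_mul, hRpdef, Rp_eval_root α hj, mul_zero]
      have hf0 : f = 0 := P f S hScard hSz
      have : g = 0 := by
        rw [← htw, hf0]
        exact twPoly_zero hk0 η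
      exact hgne this
  · rintro ⟨h1, h2⟩ f S hScard hSz
    exact P_of_conditions hk0 hα b c lam η h1 h2 f S hScard hSz
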